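/- Let G be a finite simple graph, s, t vertices, and P, Q st-shortest paths in G. Let u and v be distinct non-adjacent vertices of G with N_G(u) = N_G(v) (false twins), such that u does not lie on P or on Q and u ∉ {s, t}. Then there exists a TJ-reconfiguration sequence from P to Q in G if and only if there exists a TJ-reconfiguration sequence from P to Q in the induced subgraph G − u. -/

import Mathlib

open SimpleGraph

/-- `W` is a shortest path from `s` to `t` in `G`: a path whose length (number of edges)
equals `dist_G(s,t)`. -/
def IsShortestSTPath {V : Type*} (G : SimpleGraph V) {s t : V} (W : G.Walk s t) : Prop :=
  W.IsPath ∧ W.length = G.dist s t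

/-- Two `st`-paths of the same length are TJ-adjacent if their vertex sequences differ
at exactly one position. -/
def TJAdjacent {V : Type*} (G : SimpleGraph V) {s t : V} (P Q : G.Walk s t) : Prop :=
  P.length = Q.length ∧ ∃! i : ℕ, P.getVert i ≠ Q.getVert i

/-- A TJ-reconfiguration sequence from `P` to `Q` of length `ℓ`: a sequence
`P = P_0, P_1, …, P_ℓ = Q` of `st`-shortest paths in which consecutive paths are
TJ-adjacent. -/
def TJSeq {V : Type*} (G : SimpleGraph V) {s t : V} (P Q : G.Walk s t) (ℓ : ℕ) : Prop :=
  ∃ f : ℕ → G.Walk s t, f 0 = P ∧ f ℓ = Q ∧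
    (∀ i ≤ ℓ, IsShortestSTPath G (f i)) ∧ ∀ i < ℓ, TJAdjacent G (f i) (f (i + 1))

namespace Stmt11Aux
variable {V : Type*} {G : SimpleGraph V}

/-- Walk extensionality via length and getVert. -/
lemma walk_ext {s t : V} : ∀ (W₁ W₂ : G.Walk s t), W₁.length = W₂.length →
    (∀ i, W₁.getVert i = W₂.getVert i) → W₁ = W₂ := by
  intro W₁
  induction W₁ with
  | nil =>
    intro W₂ hl _
    cases W₂ with
    | nil => rfl
    | cons h w => simp at hl
  | cons h w ih =>
    intro W₂ hl hg
    cases W₂ with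
    | nil => simp at hl
    | cons h' w' =>
      obtain rfl : _ = _ := by simpa [Walk.getVert_cons _ _ one_ne_zero] using hg 1
      rw [ih w' (by simpa using hl) (fun i => by simpa using hg (i + 1))]

/-- Walks with equal supports are equal. -/
lemma walk_support_inj {s t : V} : ∀ (W₁ W₂ : G.Walk s t), W₁.support = W₂.support → W₁ = W₂ := by
  intro W₁
  induction W₁ with
  | nil =>
    intro W₂ hsup
    cases W₂ with
    | nil => rfl
    | cons h w => simp [Walk.support_cons] at hsup
      -- support nil = [s], support cons = s :: support w (length ≥ 2)
  | cons h w ih =>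
    intro W₂ hsup
    cases W₂ with
    | nil => simp [Walk.support_cons] at hsup
    | @cons _ b' _ h' w' =>
      simp only [Walk.support_cons, List.cons.injEq, true_and] at hsup
      have hb : w.support.head? = w'.support.head? := congrArg List.head? hsup
      rw [w.support_eq_cons, w'.support_eq_cons] at hb
      simp only [List.head?_cons, Option.some.injEq] at hb
      subst hb
      rw [ih w' hsup]


lemma getVert_map {V' : Type*} {G' : SimpleGraph V'} (φ : G →g G') {s t : V}
    (W : G.Walk s t) (i : ℕ) : (W.map φ).getVert i = φ (W.getVert i) := by
  induction W generalizing i with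
  | nil =>
    rw [Walk.getVert_of_length_le _ (by simp : (Walk.nil : G.Walk _ _).length ≤ i)]
    rw [Walk.getVert_of_length_le _ (by simp)]
  | cons h w ih =>
    cases i with
    | zero => simp
    | succ n => simpa using ih n

lemma getVert_mem_support {s t : V} (W : G.Walk s t) (i : ℕ) : W.getVert i ∈ W.support := by
  rcases le_or_gt i W.length with h | h
  · exact Walk.mem_support_iff_exists_getVert.mpr ⟨i, rfl, h⟩
  · rw [W.getVert_of_length_le h.le]
    exact W.end_mem_support


/-- Lift a walk avoiding the removed set complement into the induced subgraph. -/
def liftWalk {S : Set V} : ∀ {s t : V} (W : G.Walk s t), (∀ x ∈ W.support, x ∈ S) →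
    ∀ (hs : s ∈ S) (ht : t ∈ S), (G.induce S).Walk ⟨s, hs⟩ ⟨t, ht⟩
  | _, _, Walk.nil, _, _, _ => Walk.nil
  | _, _, Walk.cons ha w, h, hs, ht =>
      Walk.cons (by simpa using ha)
        (liftWalk w (fun x hx => h x (List.mem_cons_of_mem _ hx)) (h _ (by simp)) ht)

@[simp] lemma liftWalk_support {S : Set V} {s t : V} (W : G.Walk s t)
    (h : ∀ x ∈ W.support, x ∈ S) (hs : s ∈ S) (ht : t ∈ S) :
    (liftWalk W h hs ht).support.map Subtype.val = W.support := by
  induction W with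
  | nil => simp [liftWalk]
  | cons ha w ih => simp [liftWalk, ih]

@[simp] lemma liftWalk_length {S : Set V} {s t : V} (W : G.Walk s t)
    (h : ∀ x ∈ W.support, x ∈ S) (hs : s ∈ S) (ht : t ∈ S) :
    (liftWalk W h hs ht).length = W.length := by
  induction W with
  | nil => simp [liftWalk]
  | cons ha w ih => simp [liftWalk, ih]

@[simp] lemma liftWalk_getVert {S : Set V} {s t : V} (W : G.Walk s t)
    (h : ∀ x ∈ W.support, x ∈ S) (hs : s ∈ S) (ht : t ∈ S) (i : ℕ) :
    ((liftWalk W h hs ht).getVert i).val = W.getVert i := by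
  induction W generalizing i with
  | nil =>
    rw [Walk.getVert_of_length_le _ (by simp [liftWalk] : (liftWalk _ _ _ _).length ≤ i)]
    rw [Walk.getVert_of_length_le _ (by simp)]
  | cons ha w ih =>
    cases i with
    | zero => simp [liftWalk]
    | succ n => simpa [liftWalk] using ih _ _ _ n

open Classical in
/-- The twin substitution homomorphism `u ↦ v`. -/
noncomputable def twinHom (G : SimpleGraph V) (u v : V)
    (htwin : ∀ w : V, G.Adj u w ↔ G.Adj v w) : G →g G where
  toFun x := if x = u then v else x
  map_rel' := by
    intro a b hab
    show G.Adj (if a = u then v else a) (if b = u then v else b)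
    split_ifs with h1 h2 h2
    · rw [h1, h2] at hab; exact absurd hab (G.loopless.irrefl u)
    · rw [h1] at hab; exact (htwin b).mp hab
    · rw [h2] at hab; exact ((htwin a).mp hab.symm).symm
    · exact hab

lemma length_ge_two {x y : V} (C : G.Walk x y) (hxy : x ≠ y) (hadj : ¬ G.Adj x y) :
    2 ≤ C.length := by
  match C with
  | .nil => exact absurd rfl hxy
  | .cons h .nil => exact absurd h hadj
  | .cons _ (.cons _ q) => simp only [Walk.length_cons]; omega

/-- On a shortest `s`-`t` path with `u ∉ {s,t}`, the twins `u` and `v` cannot both occur. -/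
lemma not_both_mem {s t u v : V} (huv : u ≠ v) (hnadj : ¬ G.Adj u v)
    (htwin : ∀ w : V, G.Adj u w ↔ G.Adj v w) (hus : u ≠ s) (hut : u ≠ t)
    {W : G.Walk s t} (hW : IsShortestSTPath G W)
    (hu : u ∈ W.support) (hv : v ∈ W.support) : False := by
  classical
  obtain ⟨hpath, hlen⟩ := hW
  set A := W.takeUntil u hu with hAdef
  set B := W.dropUntil u hu with hBdef
  have hAB : A.append B = W := W.take_spec hu
  have hlensum : A.length + B.length = W.length := by
    rw [← hAB, Walk.length_append]
  have hA1 : 1 ≤ A.length := by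
    rcases Nat.eq_zero_or_pos A.length with h0 | h; swap
    · exact h
    · exact absurd (Walk.eq_of_length_eq_zero h0) (Ne.symm hus)
  have hB1 : 1 ≤ B.length := by
    rcases Nat.eq_zero_or_pos B.length with h0 | h; swap
    · exact h
    · exact absurd (Walk.eq_of_length_eq_zero h0) hut
  have hvmem : v ∈ A.support ++ B.support.tail := by
    rw [← Walk.support_append, hAB]; exact hv
  rcases List.mem_append.mp hvmem with hvA | hvBt
  · -- v occurs before u
    have h2 : 2 ≤ (A.dropUntil v hvA).length :=
      length_ge_two _ (Ne.symm huv) (fun h => hnadj h.symm)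
    have hAsum : (A.takeUntil v hvA).length + (A.dropUntil v hvA).length = A.length := by
      rw [← Walk.length_append, A.take_spec hvA]
    obtain ⟨b, hb, B0, hBeq⟩ := Walk.exists_eq_cons_of_ne hut B
    have hBlen : B.length = B0.length + 1 := by rw [hBeq, Walk.length_cons]
    have hvb : G.Adj v b := (htwin b).mp hb
    have hC := G.dist_le ((A.takeUntil v hvA).append (Walk.cons hvb B0))
    rw [← hlen] at hC
    rw [Walk.length_append, Walk.length_cons] at hC
    omega
  · have hvB : v ∈ B.support := List.mem_of_mem_tail hvBt
    have h2 : 2 ≤ (B.takeUntil v hvB).length := length_ge_two _ huv hnadj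
    have hBsum : (B.takeUntil v hvB).length + (B.dropUntil v hvB).length = B.length := by
      rw [← Walk.length_append, B.take_spec hvB]
    -- decompose A from the end, via its reverse
    obtain ⟨a, ha, q, hrev⟩ := Walk.exists_eq_cons_of_ne hus A.reverse
    have hva : G.Adj a v := ((htwin a).mp ha).symm
    have hqlen : q.length + 1 = A.length := by
      have := congrArg Walk.length hrev
      simp only [Walk.length_cons, Walk.length_reverse] at this
      omega
    have hC := G.dist_le (q.reverse.append (Walk.cons hva (B.dropUntil v hvB)))
    rw [← hlen] at hC
    rw [Walk.length_append, Walk.length_cons, Walk.length_reverse] at hC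
    omega


lemma liftWalk_isPath {S : Set V} {s t : V} (W : G.Walk s t)
    (h : ∀ x ∈ W.support, x ∈ S) (hs : s ∈ S) (ht : t ∈ S) :
    (liftWalk W h hs ht).IsPath ↔ W.IsPath := by
  rw [Walk.isPath_def, Walk.isPath_def, ← liftWalk_support W h hs ht,
    List.nodup_map_iff Subtype.val_injective]

lemma compress {s t : V} : ∀ (ℓ : ℕ) (f : ℕ → G.Walk s t),
    (∀ i ≤ ℓ, IsShortestSTPath G (f i)) →
    (∀ i < ℓ, f i = f (i + 1) ∨ TJAdjacent G (f i) (f (i + 1))) →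
    ∃ m, TJSeq G (f 0) (f ℓ) m := by
  intro ℓ
  induction ℓ with
  | zero =>
    intro f hS _
    exact ⟨0, f, rfl, rfl, fun i hi => hS i hi, fun i hi => absurd hi (by omega)⟩
  | succ n ih =>
    intro f hS hA
    obtain ⟨m, g, hg0, hgm, hgS, hgA⟩ :=
      ih (fun i => f (i + 1)) (fun i hi => hS (i + 1) (by omega))
        (fun i hi => hA (i + 1) (by omega))
    rcases hA 0 (by omega) with heq | hadj
    · exact ⟨m, g, by rw [hg0]; exact heq.symm, hgm, hgS, hgA⟩
    · refine ⟨m + 1, fun i => if i = 0 then f 0 else g (i - 1), by simp, ?_, ?_, ?_⟩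
      · simp only [Nat.succ_ne_zero, if_neg, Nat.add_sub_cancel]
        exact hgm
      · intro i hi
        by_cases h0 : i = 0
        · subst h0; simpa using hS 0 (by omega)
        · simp only [if_neg h0]
          exact hgS (i - 1) (by omega)
      · intro i hi
        by_cases h0 : i = 0
        · subst h0
          simp only [if_pos rfl, if_neg (by omega : ¬ (0 : ℕ) + 1 = 0)]
          simpa [hg0] using hadj
        · simp only [if_neg h0, if_neg (by omega : ¬ i + 1 = 0)]
          have h1 : i + 1 - 1 = i - 1 + 1 := by omega
          rw [h1]
          exact hgA (i - 1) (by omega)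

end Stmt11Aux

open Stmt11Aux in
/-- Let `u, v` be false twins (distinct, non-adjacent, with the same open
neighborhoods), where `u` lies neither on `P` nor on `Q` and `u ∉ {s, t}`. Then there is a
TJ-reconfiguration sequence from `P` to `Q` in `G` iff there is one in the induced subgraph
`G − u` (between the copies of `P` and `Q` in `G − u`). -/
theorem stmt_11 {V : Type*} [Fintype V] (G : SimpleGraph V) (s t : V)
    (P Q : G.Walk s t) (hP : IsShortestSTPath G P) (hQ : IsShortestSTPath G Q)
    (u v : V) (huv : u ≠ v) (hnadj : ¬G.Adj u v)
    (htwin : ∀ w : V, G.Adj u w ↔ G.Adj v w)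
    (huP : u ∉ P.support) (huQ : u ∉ Q.support) (hus : u ≠ s) (hut : u ≠ t) :
    (∃ ℓ : ℕ, TJSeq G P Q ℓ) ↔
      ∃ (hs : s ∈ ({u}ᶜ : Set V)) (ht : t ∈ ({u}ᶜ : Set V))
        (P' Q' : (G.induce ({u}ᶜ : Set V)).Walk ⟨s, hs⟩ ⟨t, ht⟩),
        P'.support.map Subtype.val = P.support ∧
        Q'.support.map Subtype.val = Q.support ∧
        ∃ ℓ : ℕ, TJSeq (G.induce ({u}ᶜ : Set V)) P' Q' ℓ := by
  classical
  have hs : s ∈ ({u}ᶜ : Set V) := by simpa using Ne.symm hus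
  have ht : t ∈ ({u}ᶜ : Set V) := by simpa using Ne.symm hut
  have hmemP : ∀ x ∈ P.support, x ∈ ({u}ᶜ : Set V) := fun x hx => by
    simp only [Set.mem_compl_iff, Set.mem_singleton_iff]
    rintro rfl; exact huP hx
  have hmemQ : ∀ x ∈ Q.support, x ∈ ({u}ᶜ : Set V) := fun x hx => by
    simp only [Set.mem_compl_iff, Set.mem_singleton_iff]
    rintro rfl; exact huQ hx
  set G' : SimpleGraph ({u}ᶜ : Set V) := G.induce ({u}ᶜ : Set V) with hG'
  let ι : G' →g G := (Embedding.induce ({u}ᶜ : Set V)).toHom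
  have hι : ∀ x : ({u}ᶜ : Set V), ι x = x.val := fun _ => rfl
  let P' : G'.Walk ⟨s, hs⟩ ⟨t, ht⟩ := liftWalk P hmemP hs ht
  let Q' : G'.Walk ⟨s, hs⟩ ⟨t, ht⟩ := liftWalk Q hmemQ hs ht
  have hdist : G'.dist ⟨s, hs⟩ ⟨t, ht⟩ = G.dist s t := by
    apply le_antisymm
    · calc G'.dist ⟨s, hs⟩ ⟨t, ht⟩ ≤ P'.length := dist_le _
        _ = P.length := liftWalk_length P hmemP hs ht
        _ = G.dist s t := hP.2
    · obtain ⟨p, hp⟩ := Reachable.exists_walk_length_eq_dist (⟨P'⟩ : G'.Reachable _ _)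
      calc G.dist s t ≤ (p.map ι).length := dist_le _
        _ = p.length := Walk.length_map ι p
        _ = G'.dist ⟨s, hs⟩ ⟨t, ht⟩ := hp
  constructor
  · rintro ⟨ℓ, f, hf0, hfl, hfS, hfA⟩
    refine ⟨hs, ht, P', Q', liftWalk_support P hmemP hs ht, liftWalk_support Q hmemQ hs ht, ?_⟩
    let σ : G →g G := twinHom G u v htwin
    have hσ : ∀ x, σ x = if x = u then v else x := fun _ => rfl
    have hσs : σ s = s := by rw [hσ, if_neg (Ne.symm hus)]
    have hσt : σ t = t := by rw [hσ, if_neg (Ne.symm hut)]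
    have hσne : ∀ x, σ x ≠ u := by
      intro x
      rw [hσ]
      split_ifs with h
      · exact Ne.symm huv
      · exact h
    have hσid : ∀ x, x ≠ u → σ x = x := fun x hx => by rw [hσ, if_neg hx]
    let Wσ : G.Walk s t → G.Walk s t := fun W => (W.map σ).copy hσs hσt
    have hWσsup : ∀ W : G.Walk s t, ∀ x ∈ (Wσ W).support, x ∈ ({u}ᶜ : Set V) := by
      intro W x hx
      simp only [Wσ, Walk.support_copy, Walk.support_map, List.mem_map] at hx
      obtain ⟨y, _, rfl⟩ := hx
      simpa using hσne y
    let F : ℕ → G'.Walk ⟨s, hs⟩ ⟨t, ht⟩ := fun i => liftWalk (Wσ (f i)) (hWσsup _) hs ht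
    have hFlen : ∀ i, (F i).length = (f i).length := by
      intro i
      simp [F, Wσ, liftWalk_length]
    have hFget : ∀ i j, ((F i).getVert j).val = σ ((f i).getVert j) := by
      intro i j
      simp [F, Wσ, liftWalk_getVert, getVert_map]
    have hFshort : ∀ i ≤ ℓ, IsShortestSTPath G' (F i) := by
      intro i hi
      obtain ⟨hip, hil⟩ := hfS i hi
      constructor
      · rw [liftWalk_isPath]
        rw [Walk.isPath_def] at hip ⊢
        simp only [Wσ, Walk.support_copy, Walk.support_map]
        refine List.Nodup.map_on ?_ hip
        intro x hx y hy hxy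
        rw [hσ, hσ] at hxy
        split_ifs at hxy with h1 h2 h2
        · rw [h1, h2]
        · exfalso
          exact not_both_mem huv hnadj htwin hus hut (hfS i hi) (h1 ▸ hx) (hxy ▸ hy)
        · exfalso
          exact not_both_mem huv hnadj htwin hus hut (hfS i hi) (h2 ▸ hy) (hxy ▸ hx)
        · exact hxy
      · rw [hFlen, hil, hdist]
    have hFadj : ∀ i < ℓ, F i = F (i + 1) ∨ TJAdjacent G' (F i) (F (i + 1)) := by
      intro i hi
      obtain ⟨hlen, p, hp, hpuniq⟩ := hfA i hi
      have hagree : ∀ j, j ≠ p → (F i).getVert j = (F (i + 1)).getVert j := by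
        intro j hj
        by_contra hne
        have hne' : (f i).getVert j ≠ (f (i + 1)).getVert j := by
          intro h
          exact hne (Subtype.ext (by rw [hFget, hFget, h]))
        exact hj (hpuniq j hne')
      by_cases hcol : (F i).getVert p = (F (i + 1)).getVert p
      · left
        refine walk_ext _ _ (by rw [hFlen, hFlen, hlen]) (fun j => ?_)
        by_cases hjp : j = p
        · rw [hjp]; exact hcol
        · exact hagree j hjp
      · right
        refine ⟨by rw [hFlen, hFlen, hlen], p, hcol, fun q hq => ?_⟩
        by_contra hqp
        exact hq (hagree q hqp)
    obtain ⟨m, hseq⟩ := compress ℓ F hFshort hFadj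
    have hF0 : F 0 = P' := by
      refine walk_ext _ _ (by rw [hFlen, hf0, liftWalk_length]) (fun j => Subtype.ext ?_)
      rw [hFget, liftWalk_getVert, hf0]
      refine hσid _ (fun h => huP ?_)
      rw [← h]
      exact getVert_mem_support P j
    have hFl : F ℓ = Q' := by
      refine walk_ext _ _ (by rw [hFlen, hfl, liftWalk_length]) (fun j => Subtype.ext ?_)
      rw [hFget, liftWalk_getVert, hfl]
      refine hσid _ (fun h => huQ ?_)
      rw [← h]
      exact getVert_mem_support Q j
    rw [hF0, hFl] at hseq
    exact ⟨m, hseq⟩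
  · rintro ⟨hs', ht', P'', Q'', hPsup, hQsup, ℓ, f, hf0, hfl, hfS, hfA⟩
    refine ⟨ℓ, fun i => (f i).map ι, ?_, ?_, ?_, ?_⟩
    · refine walk_support_inj _ _ ?_
      rw [Walk.support_map, hf0]
      exact hPsup
    · refine walk_support_inj _ _ ?_
      rw [Walk.support_map, hfl]
      exact hQsup
    · intro i hi
      obtain ⟨hip, hil⟩ := hfS i hi
      exact ⟨Walk.map_isPath_of_injective Subtype.val_injective hip,
        by erw [Walk.length_map, hil, hdist]⟩
    · intro i hi
      obtain ⟨hlen, p, hp, hpuniq⟩ := hfA i hi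
      refine ⟨by erw [Walk.length_map, Walk.length_map, hlen], p, ?_, fun q hq => ?_⟩
      · dsimp only
        erw [getVert_map, getVert_map]
        intro h
        exact hp (Subtype.val_injective h)
      · refine hpuniq q ?_
        dsimp only at hq
        erw [getVert_map, getVert_map] at hq
        intro h
        exact hq (by rw [h])
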